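/- Let Λ ⊆ ℝʲ be the cone of increasing convex sequences based on x₁ < ⋯ < x_j, with linearly independent generators u⁰ = (1,…,1) and u^ℓ defined by u^ℓ_i = (x_i − x_ℓ)⁺ for ℓ = 1,…,j−1, so every v ∈ ℝʲ has a unique representation v = Σ_{ℓ=0}^{j−1} λ_ℓ(v) u^ℓ. Define the knot set A(v) = {1 ≤ ℓ ≤ j−1 : λ_ℓ(v) ≠ 0}. Let A ⊆ {1,…,j−1} and v', v'' ∈ ℝʲ be such that the projections of v' and v'' onto Λ both have knot set exactly A. Then for every v on the segment [v', v''], the projection of v onto Λ also has knot set A and equals the orthogonal projection of v onto the linear span L_A of {u^ℓ : ℓ ∈ A ∪ {0}}. -/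

import Mathlib

namespace Stmt14

noncomputable def lam (x : ℕ → ℝ) (v : ℕ → ℝ) (ℓ : ℕ) : ℝ :=
  if ℓ ≤ 1 then (v 2 - v 1) / (x 2 - x 1)
  else (v (ℓ + 1) - v ℓ) / (x (ℓ + 1) - x ℓ) - (v ℓ - v (ℓ - 1)) / (x ℓ - x (ℓ - 1))

noncomputable def u (x : ℕ → ℝ) (ℓ : ℕ) (i : ℕ) : ℝ := max (x i - x ℓ) 0

variable {x : ℕ → ℝ}

lemma xmono (hx : ∀ i, 1 ≤ i → x i < x (i + 1)) :
    ∀ {a b : ℕ}, 1 ≤ a → a ≤ b → x a ≤ x b := by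
  intro a b ha hab
  induction b with
  | zero => omega
  | succ n ih =>
    rcases Nat.eq_or_lt_of_le hab with h | h
    · rw [h]
    · have h1 : a ≤ n := by omega
      have h2 : 1 ≤ n := by omega
      exact le_trans (ih h1) (hx n h2).le

lemma xlt (hx : ∀ i, 1 ≤ i → x i < x (i + 1)) {a b : ℕ} (ha : 1 ≤ a) (hab : a < b) :
    x a < x b := by
  have h1 : a + 1 ≤ b := hab
  calc x a < x (a + 1) := hx a ha
    _ ≤ x b := xmono hx (by omega) h1

lemma hd (hx : ∀ i, 1 ≤ i → x i < x (i + 1)) {k : ℕ} (hk : 1 ≤ k) :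
    x (k + 1) - x k ≠ 0 := sub_ne_zero.2 (hx k hk).ne'

lemma u_zero (hx : ∀ i, 1 ≤ i → x i < x (i + 1)) {ℓ i : ℕ} (h1 : 1 ≤ i) (h : i ≤ ℓ) :
    u x ℓ i = 0 :=
  max_eq_right (sub_nonpos.2 (xmono hx h1 h))

lemma u_eq (hx : ∀ i, 1 ≤ i → x i < x (i + 1)) {ℓ i : ℕ} (h1 : 1 ≤ ℓ) (h : ℓ ≤ i) :
    u x ℓ i = x i - x ℓ :=
  max_eq_left (sub_nonneg.2 (xmono hx h1 h))

lemma lam_lin (x : ℕ → ℝ) (a b : ℕ → ℝ) (s t : ℝ) (ℓ : ℕ) :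
    lam x (fun i => s * a i + t * b i) ℓ = s * lam x a ℓ + t * lam x b ℓ := by
  unfold lam
  split_ifs <;> · simp only [div_eq_mul_inv]; ring

lemma lam_sub (x : ℕ → ℝ) (a b : ℕ → ℝ) (ℓ : ℕ) :
    lam x (fun i => a i - b i) ℓ = lam x a ℓ - lam x b ℓ := by
  unfold lam
  split_ifs <;> · simp only [div_eq_mul_inv]; ring

lemma lam_congr (x : ℕ → ℝ) (a b : ℕ → ℝ) (ℓ : ℕ) (hℓ : 1 ≤ ℓ)
    (hab : ∀ i, 1 ≤ i → i ≤ ℓ + 1 → a i = b i) : lam x a ℓ = lam x b ℓ := by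
  unfold lam
  split_ifs with h
  · rw [hab 1 (by omega) (by omega), hab 2 (by omega) (by omega)]
  · rw [hab (ℓ + 1) (by omega) (by omega), hab ℓ (by omega) (by omega),
      hab (ℓ - 1) (by omega) (by omega)]


lemma lam_u (hx : ∀ i, 1 ≤ i → x i < x (i + 1)) {ℓ m : ℕ} (hℓ : 1 ≤ ℓ) (hm : 1 ≤ m) :
    lam x (u x ℓ) m = if m = ℓ then 1 else 0 := by
  by_cases h1 : m ≤ 1
  · have hm1 : m = 1 := by omega
    subst hm1
    rw [lam, if_pos (by omega)]
    rw [u_zero (ℓ := ℓ) (i := 1) hx (by omega) (by omega)]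
    by_cases hℓ1 : ℓ = 1
    · subst hℓ1
      rw [u_eq (ℓ := 1) (i := 2) hx (by omega) (by omega)]
      rw [if_pos rfl, sub_zero, div_self (hd hx (by omega))]
    · rw [u_zero (ℓ := ℓ) (i := 2) hx (by omega) (by omega)]
      rw [if_neg (by omega)]
      simp
  · obtain ⟨k, rfl⟩ : ∃ k, m = k + 2 := ⟨m - 2, by omega⟩
    rw [lam, if_neg (by omega)]
    have e1 : k + 2 - 1 = k + 1 := by omega
    rw [e1]
    rcases lt_trichotomy ℓ (k + 2) with hc | hc | hc
    · rw [u_eq (ℓ := ℓ) (i := k + 2 + 1) hx hℓ (by omega),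
        u_eq (ℓ := ℓ) (i := k + 2) hx hℓ (by omega),
        u_eq (ℓ := ℓ) (i := k + 1) hx hℓ (by omega)]
      rw [if_neg (by omega)]
      rw [show x (k + 2 + 1) - x ℓ - (x (k + 2) - x ℓ) = x (k + 2 + 1) - x (k + 2) from by ring,
        show x (k + 2) - x ℓ - (x (k + 1) - x ℓ) = x (k + 1 + 1) - x (k + 1) from by norm_num,
        div_self (hd hx (by omega : 1 ≤ k + 2)),
        div_self (hd hx (by omega : 1 ≤ k + 1))]
      ring
    · subst hc
      rw [u_zero (ℓ := k + 2) (i := k + 1) hx (by omega) (by omega),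
        u_zero (ℓ := k + 2) (i := k + 2) hx (by omega) (by omega),
        u_eq (ℓ := k + 2) (i := k + 2 + 1) hx (by omega) (by omega)]
      rw [if_pos rfl, sub_zero, sub_zero, div_self (hd hx (by omega : 1 ≤ k + 2))]
      simp
    · rw [u_zero (ℓ := ℓ) (i := k + 2 + 1) hx (by omega) (by omega),
        u_zero (ℓ := ℓ) (i := k + 2) hx (by omega) (by omega),
        u_zero (ℓ := ℓ) (i := k + 1) hx (by omega) (by omega)]
      rw [if_neg (by omega)]
      simp

lemma slope_sum (hx : ∀ i, 1 ≤ i → x i < x (i + 1)) (v : ℕ → ℝ) :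
    ∀ i, 1 ≤ i → (v (i + 1) - v i) / (x (i + 1) - x i) = ∑ ℓ ∈ Finset.Icc 1 i, lam x v ℓ := by
  intro i hi
  induction i with
  | zero => omega
  | succ n ih =>
    by_cases hn : n = 0
    · subst hn
      simp [lam]
    · have hn1 : 1 ≤ n := by omega
      rw [Finset.sum_Icc_succ_top (by omega : 1 ≤ n + 1), ← ih hn1]
      rw [lam, if_neg (by omega)]
      have e1 : n + 1 - 1 = n := by omega
      rw [e1]
      ring

lemma rep {j : ℕ} (hj : 2 ≤ j) (hx : ∀ i, 1 ≤ i → x i < x (i + 1)) (v : ℕ → ℝ) :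
    ∀ i, 1 ≤ i → i ≤ j →
      v i = v 1 + ∑ ℓ ∈ Finset.Icc 1 (j - 1), lam x v ℓ * u x ℓ i := by
  intro i hi
  induction i with
  | zero => omega
  | succ n ih =>
    intro hij
    by_cases hn : n = 0
    · subst hn
      have : ∑ ℓ ∈ Finset.Icc 1 (j - 1), lam x v ℓ * u x ℓ 1 = 0 := by
        apply Finset.sum_eq_zero
        intro ℓ hℓ
        rw [Finset.mem_Icc] at hℓ
        rw [u_zero (ℓ := ℓ) (i := 1) hx (by omega) (by omega), mul_zero]
      rw [this, add_zero]
    · have hn1 : 1 ≤ n := by omega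
      have hnj : n ≤ j - 1 := by omega
      have hsub : Finset.Icc 1 n ⊆ Finset.Icc 1 (j - 1) :=by
        intro ℓ hℓ
        rw [Finset.mem_Icc] at *
        omega
      have e0 : ∑ ℓ ∈ Finset.Icc 1 (j - 1), lam x v ℓ * (u x ℓ (n + 1) - u x ℓ n)
          = ∑ ℓ ∈ Finset.Icc 1 n, lam x v ℓ * (u x ℓ (n + 1) - u x ℓ n) := by
        refine (Finset.sum_subset hsub ?_).symm
        intro ℓ hℓ hℓ'
        rw [Finset.mem_Icc] at hℓ hℓ'
        have hnℓ : n + 1 ≤ ℓ := by omega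
        rw [u_zero (ℓ := ℓ) (i := n + 1) hx (by omega) hnℓ,
          u_zero (ℓ := ℓ) (i := n) hx (by omega) (by omega)]
        ring
      have e1 : ∑ ℓ ∈ Finset.Icc 1 n, lam x v ℓ * (u x ℓ (n + 1) - u x ℓ n)
          = (∑ ℓ ∈ Finset.Icc 1 n, lam x v ℓ) * (x (n + 1) - x n) := by
        rw [Finset.sum_mul]
        refine Finset.sum_congr rfl ?_
        intro ℓ hℓ
        rw [Finset.mem_Icc] at hℓ
        rw [u_eq (ℓ := ℓ) (i := n + 1) hx (by omega) (by omega),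
          u_eq (ℓ := ℓ) (i := n) hx (by omega) (by omega)]
        ring
      have e2 : (∑ ℓ ∈ Finset.Icc 1 n, lam x v ℓ) * (x (n + 1) - x n) = v (n + 1) - v n := by
        rw [← slope_sum hx v n hn1, div_mul_cancel₀ _ (hd hx hn1)]
      have e3 : ∑ ℓ ∈ Finset.Icc 1 (j - 1), lam x v ℓ * (u x ℓ (n + 1) - u x ℓ n)
          = ∑ ℓ ∈ Finset.Icc 1 (j - 1), lam x v ℓ * u x ℓ (n + 1)
            - ∑ ℓ ∈ Finset.Icc 1 (j - 1), lam x v ℓ * u x ℓ n := by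
        rw [← Finset.sum_sub_distrib]
        refine Finset.sum_congr rfl fun ℓ _ => by ring
      have ihn := ih (by omega) (by omega)
      rw [e0, e1, e2] at e3
      linarith

lemma key (N c ε : ℝ) (hN : 0 ≤ N) (hε : 0 < ε)
    (h : ∀ s : ℝ, 0 < s → s ≤ ε → 0 ≤ N * s ^ 2 - 2 * s * c) : c ≤ 0 := by
  by_contra hc
  push_neg at hc
  set s := min ε (c / (N + 1)) with hs_def
  have hN1 : (0:ℝ) < N + 1 := by linarith
  have hs : 0 < s := lt_min hε (div_pos hc hN1)
  have hsε : s ≤ ε := min_le_left _ _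
  have hs2 : s ≤ c / (N + 1) := min_le_right _ _
  have hs3 : s * (N + 1) ≤ c := (le_div_iff₀ hN1).mp hs2
  have h4 := h s hs hsε
  nlinarith [mul_le_mul_of_nonneg_right hs3 hs.le, mul_pos hs hc, sq_nonneg s]

lemma expand (j : ℕ) (y p w : ℕ → ℝ) :
    ∑ i ∈ Finset.Icc 1 j, (y i - w i) ^ 2
      = ∑ i ∈ Finset.Icc 1 j, (y i - p i) ^ 2 + ∑ i ∈ Finset.Icc 1 j, (w i - p i) ^ 2
        - 2 * ∑ i ∈ Finset.Icc 1 j, (y i - p i) * (w i - p i) := by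
  rw [Finset.mul_sum, ← Finset.sum_add_distrib, ← Finset.sum_sub_distrib]
  exact Finset.sum_congr rfl fun i _ => by ring

lemma dir (j : ℕ) (y p d : ℕ → ℝ) (ε : ℝ) (hε : 0 < ε)
    (hmin : ∀ s : ℝ, 0 < s → s ≤ ε →
      ∑ i ∈ Finset.Icc 1 j, (y i - p i) ^ 2
        ≤ ∑ i ∈ Finset.Icc 1 j, (y i - (p i + s * d i)) ^ 2) :
    ∑ i ∈ Finset.Icc 1 j, (y i - p i) * d i ≤ 0 := by
  apply key (∑ i ∈ Finset.Icc 1 j, d i ^ 2) _ ε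
    (Finset.sum_nonneg fun i _ => sq_nonneg _) hε
  intro s hs hsε
  have h1 := hmin s hs hsε
  have h2 : ∑ i ∈ Finset.Icc 1 j, (y i - (p i + s * d i)) ^ 2
      = ∑ i ∈ Finset.Icc 1 j, (y i - p i) ^ 2
        + ((∑ i ∈ Finset.Icc 1 j, d i ^ 2) * s ^ 2
          - 2 * s * ∑ i ∈ Finset.Icc 1 j, (y i - p i) * d i) := by
    rw [Finset.sum_mul, Finset.mul_sum, ← Finset.sum_sub_distrib,
      ← Finset.sum_add_distrib]
    exact Finset.sum_congr rfl fun i _ => by ring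
  rw [h2] at h1
  linarith


lemma decomp {j : ℕ} (hj : 2 ≤ j) (hx : ∀ i, 1 ≤ i → x i < x (i + 1)) (d g : ℕ → ℝ) :
    ∑ i ∈ Finset.Icc 1 j, d i * g i
      = g 1 * (∑ i ∈ Finset.Icc 1 j, d i)
        + ∑ ℓ ∈ Finset.Icc 1 (j - 1), lam x g ℓ * ∑ i ∈ Finset.Icc 1 j, d i * u x ℓ i := by
  have step1 : ∑ i ∈ Finset.Icc 1 j, d i * g i
      = ∑ i ∈ Finset.Icc 1 j,
          (d i * g 1 + ∑ ℓ ∈ Finset.Icc 1 (j - 1), lam x g ℓ * (d i * u x ℓ i)) := by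
    refine Finset.sum_congr rfl fun i hi => ?_
    rw [Finset.mem_Icc] at hi
    rw [rep hj hx g i hi.1 hi.2, mul_add, Finset.mul_sum]
    congr 1
    exact Finset.sum_congr rfl fun ℓ _ => by ring
  rw [step1, Finset.sum_add_distrib, ← Finset.sum_mul, Finset.sum_comm]
  congr 1
  · ring
  · refine Finset.sum_congr rfl fun ℓ _ => ?_
    rw [Finset.mul_sum]

lemma kkt {j : ℕ} (hj : 2 ≤ j) (hx : ∀ i, 1 ≤ i → x i < x (i + 1)) (y p : ℕ → ℝ)
    (hcone : ∀ ℓ, 1 ≤ ℓ → ℓ ≤ j - 1 → 0 ≤ lam x p ℓ)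
    (hmin : ∀ w : ℕ → ℝ, (∀ ℓ, 1 ≤ ℓ → ℓ ≤ j - 1 → 0 ≤ lam x w ℓ) →
      ∑ i ∈ Finset.Icc 1 j, (y i - p i) ^ 2 ≤ ∑ i ∈ Finset.Icc 1 j, (y i - w i) ^ 2) :
    (∑ i ∈ Finset.Icc 1 j, (y i - p i)) = 0 ∧
    (∀ ℓ, 1 ≤ ℓ → ℓ ≤ j - 1 → ∑ i ∈ Finset.Icc 1 j, (y i - p i) * u x ℓ i ≤ 0) ∧
    (∀ ℓ, 1 ≤ ℓ → ℓ ≤ j - 1 → 0 < lam x p ℓ →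
      ∑ i ∈ Finset.Icc 1 j, (y i - p i) * u x ℓ i = 0) := by
  have lam_one : ∀ m, lam x (fun _ => (1:ℝ)) m = 0 := by
    intro m
    unfold lam
    split_ifs <;> simp
  have lam_shift : ∀ (d : ℕ → ℝ) (s : ℝ) (m : ℕ),
      lam x (fun i => p i + s * d i) m = lam x p m + s * lam x d m := by
    intro d s m
    have := lam_lin x p d 1 s m
    simpa using this
  -- direction u0 = 1 and -1
  have h0 : (∑ i ∈ Finset.Icc 1 j, (y i - p i)) = 0 := by
    have hplus : ∑ i ∈ Finset.Icc 1 j, (y i - p i) * (1:ℝ) ≤ 0 := by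
      apply dir j y p (fun _ => (1:ℝ)) 1 one_pos
      intro s hs _
      apply hmin
      intro ℓ h1 h2
      rw [lam_shift, lam_one, mul_zero, add_zero]
      exact hcone ℓ h1 h2
    have hminus : ∑ i ∈ Finset.Icc 1 j, (y i - p i) * (-1:ℝ) ≤ 0 := by
      apply dir j y p (fun _ => (-1:ℝ)) 1 one_pos
      intro s hs _
      apply hmin
      intro ℓ h1 h2
      rw [lam_shift]
      have : lam x (fun _ => (-1:ℝ)) ℓ = 0 := by
        unfold lam
        split_ifs <;> simp
      rw [this, mul_zero, add_zero]
      exact hcone ℓ h1 h2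
    simp only [mul_one] at hplus
    simp only [mul_neg_one, Finset.sum_neg_distrib] at hminus
    linarith
  refine ⟨h0, ?_, ?_⟩
  · intro ℓ h1 h2
    apply dir j y p (u x ℓ) 1 one_pos
    intro s hs _
    apply hmin
    intro m hm1 hm2
    rw [lam_shift, lam_u hx h1 hm1]
    split_ifs with h
    · have := hcone m hm1 hm2
      nlinarith
    · rw [mul_zero, add_zero]
      exact hcone m hm1 hm2
  · intro ℓ h1 h2 hpos
    have hle : ∑ i ∈ Finset.Icc 1 j, (y i - p i) * u x ℓ i ≤ 0 := by
      apply dir j y p (u x ℓ) 1 one_pos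
      intro s hs _
      apply hmin
      intro m hm1 hm2
      rw [lam_shift, lam_u hx h1 hm1]
      split_ifs with h
      · have := hcone m hm1 hm2
        nlinarith
      · rw [mul_zero, add_zero]
        exact hcone m hm1 hm2
    have hge : ∑ i ∈ Finset.Icc 1 j, (y i - p i) * (-(u x ℓ i)) ≤ 0 := by
      apply dir j y p (fun i => -(u x ℓ i)) (lam x p ℓ) hpos
      intro s hs hsε
      apply hmin
      intro m hm1 hm2
      have hlneg : lam x (fun i => -(u x ℓ i)) m = -(lam x (u x ℓ) m) := by
        unfold lam
        split_ifs <;> · simp only [div_eq_mul_inv]; ring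
      rw [lam_shift, hlneg, lam_u hx h1 hm1]
      split_ifs with h
      · subst h
        have := hcone m hm1 hm2
        nlinarith
      · simp only [neg_zero, mul_zero, add_zero]
        exact hcone m hm1 hm2
    simp only [mul_neg, Finset.sum_neg_distrib] at hge
    linarith

end Stmt14

/-- Lemma S2 of the paper: if the projections of `v'` and `v''` onto the cone
`Λʲ` of increasing convex sequences both have knot set exactly `A`, then for
every `v` on the segment `[v', v'']`, the projection of `v` onto `Λʲ` also has
knot set `A` and coincides with the orthogonal projection of `v` onto the
linear span `L_A = {w : A(w) ⊆ A}`. -/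
theorem stmt14 (j : ℕ) (hj : 2 ≤ j) (x : ℕ → ℝ)
    (hx : ∀ i, 1 ≤ i → x i < x (i + 1)) :
    let lam : (ℕ → ℝ) → ℕ → ℝ := fun v ℓ =>
      if ℓ ≤ 1 then (v 2 - v 1) / (x 2 - x 1)
      else (v (ℓ + 1) - v ℓ) / (x (ℓ + 1) - x ℓ) - (v ℓ - v (ℓ - 1)) / (x ℓ - x (ℓ - 1))
    let cone : (ℕ → ℝ) → Prop := fun v => ∀ ℓ, 1 ≤ ℓ → ℓ ≤ j - 1 → 0 ≤ lam v ℓ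
    let dsq : (ℕ → ℝ) → (ℕ → ℝ) → ℝ := fun u v => ∑ i ∈ Finset.Icc 1 j, (u i - v i) ^ 2
    let isProj : (ℕ → ℝ) → (ℕ → ℝ) → Prop := fun y p =>
      cone p ∧ ∀ u, cone u → dsq y p ≤ dsq y u
    let knots : (ℕ → ℝ) → Set ℕ := fun v => {ℓ | 1 ≤ ℓ ∧ ℓ ≤ j - 1 ∧ lam v ℓ ≠ 0}
    ∀ (A : Set ℕ) (v' v'' p' p'' : ℕ → ℝ),
      isProj v' p' → knots p' = A → isProj v'' p'' → knots p'' = A →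
      ∀ t ∈ Set.Icc (0 : ℝ) 1, ∀ p, isProj (fun i => (1 - t) * v' i + t * v'' i) p →
        knots p = A ∧
        ∀ w : ℕ → ℝ, knots w ⊆ A →
          dsq (fun i => (1 - t) * v' i + t * v'' i) p ≤
            dsq (fun i => (1 - t) * v' i + t * v'' i) w := by
  intro lam cone dsq isProj knots A v' v'' p' p'' h1 h2 h3 h4 t ht p hp
  obtain ⟨ht0, ht1⟩ := ht
  set L := Stmt14.lam x with hL
  set U := Stmt14.u x with hU
  -- explicit forms of the hypotheses
  have h1c : ∀ ℓ, 1 ≤ ℓ → ℓ ≤ j - 1 → 0 ≤ L p' ℓ := h1.1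
  have h3c : ∀ ℓ, 1 ≤ ℓ → ℓ ≤ j - 1 → 0 ≤ L p'' ℓ := h3.1
  have h1m : ∀ w : ℕ → ℝ, (∀ ℓ, 1 ≤ ℓ → ℓ ≤ j - 1 → 0 ≤ L w ℓ) →
      ∑ i ∈ Finset.Icc 1 j, (v' i - p' i) ^ 2 ≤ ∑ i ∈ Finset.Icc 1 j, (v' i - w i) ^ 2 :=
    h1.2
  have h3m : ∀ w : ℕ → ℝ, (∀ ℓ, 1 ≤ ℓ → ℓ ≤ j - 1 → 0 ≤ L w ℓ) →
      ∑ i ∈ Finset.Icc 1 j, (v'' i - p'' i) ^ 2 ≤ ∑ i ∈ Finset.Icc 1 j, (v'' i - w i) ^ 2 :=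
    h3.2
  have h2' : ∀ ℓ, ℓ ∈ A ↔ (1 ≤ ℓ ∧ ℓ ≤ j - 1 ∧ L p' ℓ ≠ 0) := by
    intro ℓ; rw [← h2]; exact Iff.rfl
  have h4' : ∀ ℓ, ℓ ∈ A ↔ (1 ≤ ℓ ∧ ℓ ≤ j - 1 ∧ L p'' ℓ ≠ 0) := by
    intro ℓ; rw [← h4]; exact Iff.rfl
  have hA : ∀ ℓ ∈ A, 1 ≤ ℓ ∧ ℓ ≤ j - 1 ∧ 0 < L p' ℓ ∧ 0 < L p'' ℓ := by
    intro ℓ hℓ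
    obtain ⟨a, b, c⟩ := (h2' ℓ).mp hℓ
    obtain ⟨_, _, c'⟩ := (h4' ℓ).mp hℓ
    exact ⟨a, b, lt_of_le_of_ne (h1c ℓ a b) (Ne.symm c), lt_of_le_of_ne (h3c ℓ a b) (Ne.symm c')⟩
  have hA0' : ∀ ℓ, 1 ≤ ℓ → ℓ ≤ j - 1 → ℓ ∉ A → L p' ℓ = 0 := by
    intro ℓ a b c
    by_contra hne
    exact c ((h2' ℓ).mpr ⟨a, b, hne⟩)
  have hA0'' : ∀ ℓ, 1 ≤ ℓ → ℓ ≤ j - 1 → ℓ ∉ A → L p'' ℓ = 0 := by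
    intro ℓ a b c
    by_contra hne
    exact c ((h4' ℓ).mpr ⟨a, b, hne⟩)
  obtain ⟨E0', Ele', Eeq'⟩ := Stmt14.kkt hj hx v' p' h1c h1m
  obtain ⟨E0'', Ele'', Eeq''⟩ := Stmt14.kkt hj hx v'' p'' h3c h3m
  set y := fun i => (1 - t) * v' i + t * v'' i with hy
  set q := fun i => (1 - t) * p' i + t * p'' i with hq
  have hqlam : ∀ ℓ, L q ℓ = (1 - t) * L p' ℓ + t * L p'' ℓ := by
    intro ℓ
    rw [hq]
    exact Stmt14.lam_lin x p' p'' (1 - t) t ℓ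
  have hconeq : ∀ ℓ, 1 ≤ ℓ → ℓ ≤ j - 1 → 0 ≤ L q ℓ := by
    intro ℓ a b
    rw [hqlam]
    have := h1c ℓ a b
    have := h3c ℓ a b
    have h1t : (0:ℝ) ≤ 1 - t := by linarith
    nlinarith
  have hEy : ∀ g : ℕ → ℝ, ∑ i ∈ Finset.Icc 1 j, (y i - q i) * g i
      = (1 - t) * ∑ i ∈ Finset.Icc 1 j, (v' i - p' i) * g i
        + t * ∑ i ∈ Finset.Icc 1 j, (v'' i - p'' i) * g i := by
    intro g
    rw [Finset.mul_sum, Finset.mul_sum, ← Finset.sum_add_distrib]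
    refine Finset.sum_congr rfl fun i _ => ?_
    simp only [hy, hq]
    ring
  have hEy0 : ∑ i ∈ Finset.Icc 1 j, (y i - q i) = 0 := by
    have := hEy (fun _ => 1)
    simp only [mul_one] at this
    rw [this, E0', E0'']
    ring
  have hEyle : ∀ ℓ, 1 ≤ ℓ → ℓ ≤ j - 1 →
      ∑ i ∈ Finset.Icc 1 j, (y i - q i) * U ℓ i ≤ 0 := by
    intro ℓ a b
    rw [hEy (U ℓ)]
    have e1 := Ele' ℓ a b
    have e2 := Ele'' ℓ a b
    have h1t : (0:ℝ) ≤ 1 - t := by linarith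
    nlinarith
  have hEyA : ∀ ℓ ∈ A, ∑ i ∈ Finset.Icc 1 j, (y i - q i) * U ℓ i = 0 := by
    intro ℓ hℓ
    obtain ⟨a, b, c', c''⟩ := hA ℓ hℓ
    rw [hEy (U ℓ), Eeq' ℓ a b c', Eeq'' ℓ a b c'']
    ring
  -- key inner-product inequality
  have hip : ∀ w : ℕ → ℝ, (∀ ℓ, 1 ≤ ℓ → ℓ ≤ j - 1 → ℓ ∉ A → 0 ≤ L w ℓ) →
      ∑ i ∈ Finset.Icc 1 j, (y i - q i) * (w i - q i) ≤ 0 := by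
    intro w hw
    have hd : ∑ i ∈ Finset.Icc 1 j, (y i - q i) * (w i - q i)
        = (w 1 - q 1) * (∑ i ∈ Finset.Icc 1 j, (y i - q i))
          + ∑ ℓ ∈ Finset.Icc 1 (j - 1),
              L (fun i => w i - q i) ℓ * ∑ i ∈ Finset.Icc 1 j, (y i - q i) * U ℓ i :=
      Stmt14.decomp hj hx _ _
    rw [hd, hEy0, mul_zero, zero_add]
    apply Finset.sum_nonpos
    intro ℓ hℓ
    rw [Finset.mem_Icc] at hℓ
    rw [hL, Stmt14.lam_sub x w q ℓ, ← hL]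
    by_cases hAm : ℓ ∈ A
    · rw [hEyA ℓ hAm, mul_zero]
    · have hq0 : L q ℓ = 0 := by
        rw [hqlam, hA0' ℓ hℓ.1 hℓ.2 hAm, hA0'' ℓ hℓ.1 hℓ.2 hAm]
        ring
      rw [hq0, sub_zero]
      exact mul_nonpos_of_nonneg_of_nonpos (hw ℓ hℓ.1 hℓ.2 hAm) (hEyle ℓ hℓ.1 hℓ.2)
  have hqmin : ∀ w : ℕ → ℝ, (∀ ℓ, 1 ≤ ℓ → ℓ ≤ j - 1 → 0 ≤ L w ℓ) →
      ∑ i ∈ Finset.Icc 1 j, (y i - q i) ^ 2 ≤ ∑ i ∈ Finset.Icc 1 j, (y i - w i) ^ 2 := by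
    intro w hw
    have h5 := hip w (fun ℓ a b _ => hw ℓ a b)
    rw [Stmt14.expand j y q w]
    have h6 : (0:ℝ) ≤ ∑ i ∈ Finset.Icc 1 j, (w i - q i) ^ 2 :=
      Finset.sum_nonneg fun i _ => sq_nonneg _
    linarith
  have hpc : ∀ ℓ, 1 ≤ ℓ → ℓ ≤ j - 1 → 0 ≤ L p ℓ := hp.1
  have hpm : ∀ w : ℕ → ℝ, (∀ ℓ, 1 ≤ ℓ → ℓ ≤ j - 1 → 0 ≤ L w ℓ) →
      ∑ i ∈ Finset.Icc 1 j, (y i - p i) ^ 2 ≤ ∑ i ∈ Finset.Icc 1 j, (y i - w i) ^ 2 :=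
    hp.2
  have hqp : ∑ i ∈ Finset.Icc 1 j, (y i - q i) ^ 2
      = ∑ i ∈ Finset.Icc 1 j, (y i - p i) ^ 2 :=
    le_antisymm (hqmin p hpc) (hpm q hconeq)
  -- uniqueness of projection on the window
  have heq : ∀ i ∈ Finset.Icc 1 j, p i = q i := by
    set m := fun i => (1/2 : ℝ) * p i + (1/2 : ℝ) * q i with hm
    have hconem : ∀ ℓ, 1 ≤ ℓ → ℓ ≤ j - 1 → 0 ≤ L m ℓ := by
      intro ℓ a b
      rw [hm, hL, Stmt14.lam_lin x p q (1/2) (1/2) ℓ, ← hL]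
      have := hpc ℓ a b
      have := hconeq ℓ a b
      linarith
    have h5 := hpm m hconem
    have hid : ∑ i ∈ Finset.Icc 1 j, (y i - m i) ^ 2
        = (∑ i ∈ Finset.Icc 1 j, (y i - p i) ^ 2) / 2
          + (∑ i ∈ Finset.Icc 1 j, (y i - q i) ^ 2) / 2
          - (∑ i ∈ Finset.Icc 1 j, (p i - q i) ^ 2) / 4 := by
      rw [Finset.sum_div, Finset.sum_div, Finset.sum_div, ← Finset.sum_add_distrib,
        ← Finset.sum_sub_distrib]
      refine Finset.sum_congr rfl fun i _ => ?_
      simp only [hm]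
      ring
    have hzero : ∑ i ∈ Finset.Icc 1 j, (p i - q i) ^ 2 = 0 := by
      have hnn : (0:ℝ) ≤ ∑ i ∈ Finset.Icc 1 j, (p i - q i) ^ 2 :=
        Finset.sum_nonneg fun i _ => sq_nonneg _
      have : ∑ i ∈ Finset.Icc 1 j, (p i - q i) ^ 2 ≤ 0 := by
        rw [hid] at h5
        linarith [hqp]
      linarith
    intro i hi
    have := (Finset.sum_eq_zero_iff_of_nonneg (fun i _ => sq_nonneg (p i - q i))).mp hzero i hi
    have h6 : p i - q i = 0 := by
      have := sq_eq_zero_iff.mp this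
      exact this
    linarith [h6]
  have hlameq : ∀ ℓ, 1 ≤ ℓ → ℓ ≤ j - 1 → L p ℓ = L q ℓ := by
    intro ℓ a b
    exact Stmt14.lam_congr x p q ℓ a fun i hi1 hi2 =>
      heq i (Finset.mem_Icc.mpr ⟨hi1, by omega⟩)
  constructor
  · -- knots p = A
    apply Set.ext
    intro ℓ
    constructor
    · rintro ⟨a, b, c⟩
      by_contra hno
      apply c
      show L p ℓ = 0
      rw [hlameq ℓ a b, hqlam, hA0' ℓ a b hno, hA0'' ℓ a b hno]
      ring
    · intro hAℓ
      obtain ⟨a, b, c', c''⟩ := hA ℓ hAℓ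
      refine ⟨a, b, ?_⟩
      show L p ℓ ≠ 0
      rw [hlameq ℓ a b, hqlam]
      have hpos : 0 < (1 - t) * L p' ℓ + t * L p'' ℓ := by
        rcases eq_or_lt_of_le ht0 with h | h
        · rw [← h]; simpa using c'
        · have : 0 < t * L p'' ℓ := mul_pos h c''
          have h1t : (0:ℝ) ≤ 1 - t := by linarith
          nlinarith
      exact ne_of_gt hpos
  · -- minimality over L_A
    intro w hw
    have hwA : ∀ ℓ, 1 ≤ ℓ → ℓ ≤ j - 1 → ℓ ∉ A → L w ℓ = 0 := by
      intro ℓ a b c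
      by_contra hne
      exact c (hw ⟨a, b, hne⟩)
    have h5 := hip w (fun ℓ a b c => by rw [hwA ℓ a b c])
    have h6 : ∑ i ∈ Finset.Icc 1 j, (y i - p i) * (w i - p i)
        = ∑ i ∈ Finset.Icc 1 j, (y i - q i) * (w i - q i) :=
      Finset.sum_congr rfl fun i hi => by rw [heq i hi]
    show ∑ i ∈ Finset.Icc 1 j, (y i - p i) ^ 2 ≤ ∑ i ∈ Finset.Icc 1 j, (y i - w i) ^ 2
    rw [Stmt14.expand j y p w]
    have h7 : (0:ℝ) ≤ ∑ i ∈ Finset.Icc 1 j, (w i - p i) ^ 2 :=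
      Finset.sum_nonneg fun i _ => sq_nonneg _
    rw [h6]
    linarith
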